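/- Let A be a quadratic algebra over a field F of characteristic not 2. Then there exists a unique symmetric F-bilinear form ⟨·,·⟩ on A such that a² - 2⟨a,1⟩a + ⟨a,a⟩1 = 0 for all a ∈ A. -/

import Mathlib

/-- A quadratic algebra over a field of characteristic not `2` has a unique
symmetric bilinear form `⟨·,·⟩` with `a² - 2⟨a,1⟩a + ⟨a,a⟩1 = 0` for all `a`. -/
theorem quadratic_exists_unique_bilinear_form
    {F A : Type*} [Field F] [NonAssocRing A] [Nontrivial A]
    [Module F A] [SMulCommClass F A A] [IsScalarTower F A A]
    (h2 : (2 : F) ≠ 0)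
    (hquad : ∀ a : A, ∃ r s : F, a * a = r • a + s • (1 : A)) :
    ∃! B : A →ₗ[F] A →ₗ[F] F, (∀ a b : A, B a b = B b a) ∧
      ∀ a : A, a * a - (2 * B a 1) • a + (B a a) • (1 : A) = 0 := by
  have hone : (1:A) ≠ 0 := one_ne_zero
  haveI : NeZero (2:F) := ⟨h2⟩
  have hsmul0 : ∀ c : F, c • (1:A) = 0 → c = 0 := by
    intro c h
    by_contra hc
    have : (1:A) = 0 := by
      calc (1:A) = c⁻¹ • (c • (1:A)) := by rw [smul_smul, inv_mul_cancel₀ hc, one_smul]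
      _ = 0 := by rw [h, smul_zero]
    exact hone this
  have hsmul1 : ∀ c d : F, c • (1:A) = d • (1:A) → c = d := by
    intro c d h
    have h0 : (c - d) • (1:A) = 0 := by rw [sub_smul, h, sub_self]
    exact sub_eq_zero.mp (hsmul0 _ h0)
  -- uniqueness of coefficients for a ∉ F•1
  have indep : ∀ a : A, (¬ ∃ c : F, a = c • (1:A)) → ∀ r s r' s' : F,
      r • a + s • (1:A) = r' • a + s' • (1:A) → r = r' ∧ s = s' := by
    intro a ha r s r' s' h
    have hr : r = r' := by
      by_contra hrr
      apply ha
      have hne : r - r' ≠ 0 := sub_ne_zero.mpr hrr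
      refine ⟨(r-r')⁻¹ * (s' - s), ?_⟩
      have h1 : (r - r') • a = (s' - s) • (1:A) := by
        rw [sub_smul, sub_smul]
        linear_combination (norm := module) h
      calc a = (r-r')⁻¹ • ((r-r') • a) := by
              rw [smul_smul, inv_mul_cancel₀ hne, one_smul]
      _ = ((r-r')⁻¹ * (s' - s)) • (1:A) := by rw [h1, smul_smul]
    refine ⟨hr, ?_⟩
    apply hsmul1
    rw [hr] at h
    exact add_left_cancel h
  -- existence of trace t and norm n
  have key : ∀ a : A, ∃ r s : F, (a * a = (2*r) • a + (-s) • (1:A)) ∧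
      ∀ c : F, a = c • (1:A) → r = c ∧ s = c^2 := by
    intro a
    by_cases ha : ∃ c : F, a = c • (1:A)
    · obtain ⟨c, rfl⟩ := ha
      refine ⟨c, c^2, ?_, ?_⟩
      · rw [smul_mul_assoc, mul_smul_comm, one_mul]
        module
      · intro d hd
        have hcd := hsmul1 c d hd
        exact ⟨hcd, by rw [hcd]⟩
    · obtain ⟨r, s, hrs⟩ := hquad a
      refine ⟨r/2, -s, ?_, fun c hc => absurd ⟨c, hc⟩ ha⟩
      rw [hrs, neg_neg]
      have hr2 : 2 * (r/2) = r := by field_simp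
      rw [hr2]
  choose t n hsq hc using key
  have t1 : t 1 = 1 := (hc 1 1 (by rw [one_smul])).1
  have coeff : ∀ a : A, (¬ ∃ c : F, a = c • (1:A)) → ∀ r s : F,
      a * a = r • a + s • (1:A) → r = 2 * t a ∧ s = - n a := by
    intro a ha r s h
    exact indep a ha r s _ _ (h.symm.trans (hsq a))
  -- t is homogeneous
  have t_smul : ∀ (c : F) (a : A), t (c • a) = c * t a := by
    intro c a
    by_cases ha : ∃ d : F, a = d • (1:A)
    · obtain ⟨d, rfl⟩ := ha
      rw [(hc (c • d • (1:A)) (c*d) (by rw [smul_smul])).1, (hc _ d rfl).1]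
    · by_cases hc0 : c = 0
      · subst hc0
        rw [zero_smul, zero_mul]
        exact (hc 0 0 (by rw [zero_smul])).1
      · have hca : ¬ ∃ d : F, c • a = d • (1:A) := by
          rintro ⟨d, hd⟩
          apply ha
          refine ⟨c⁻¹ * d, ?_⟩
          calc a = c⁻¹ • (c • a) := by rw [smul_smul, inv_mul_cancel₀ hc0, one_smul]
          _ = (c⁻¹ * d) • (1:A) := by rw [hd, smul_smul]
        have hsq' : (c • a) * (c • a) = (2*(c * t a)) • (c • a) + (-(c^2 * n a)) • (1:A) := by
          rw [smul_mul_assoc, mul_smul_comm, hsq a]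
          module
        have hcf := (coeff _ hca _ _ hsq').1
        exact (mul_left_cancel₀ h2 hcf).symm
  -- t on the span of 1 and a
  have lemL : ∀ a : A, (¬ ∃ c : F, a = c • (1:A)) → ∀ α β : F,
      t (α • (1:A) + β • a) = α + β * t a := by
    intro a ha α β
    by_cases hb : β = 0
    · subst hb
      rw [zero_smul, add_zero, (hc _ α rfl).1, zero_mul, add_zero]
    · have hx : ¬ ∃ c : F, α • (1:A) + β • a = c • (1:A) := by
        rintro ⟨c, hcx⟩
        apply ha
        refine ⟨β⁻¹ * (c - α), ?_⟩
        have hba : β • a = (c - α) • (1:A) := by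
          rw [sub_smul]
          linear_combination (norm := module) hcx
        calc a = β⁻¹ • (β • a) := by rw [smul_smul, inv_mul_cancel₀ hb, one_smul]
        _ = (β⁻¹ * (c - α)) • (1:A) := by rw [hba, smul_smul]
      have hxx : (α • (1:A) + β • a) * (α • (1:A) + β • a)
          = (2*α*β + 2*β^2 * t a) • a + (α^2 - β^2 * n a) • (1:A) := by
        have e : (α • (1:A) + β • a) * (α • (1:A) + β • a)
            = (α*α) • (1:A) + (2*(α*β)) • a + (β*β) • (a*a) := by
          simp only [add_mul, mul_add, smul_mul_assoc, mul_smul_comm, one_mul, mul_one]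
          module
        rw [e, hsq a]
        module
      have hxx2 : (α • (1:A) + β • a) * (α • (1:A) + β • a)
          = (2 * t (α • (1:A) + β • a) * β) • a
            + (2 * t (α • (1:A) + β • a) * α - n (α • (1:A) + β • a)) • (1:A) := by
        rw [hsq (α • (1:A) + β • a)]
        module
      have hco := (indep a ha _ _ _ _ (hxx.symm.trans hxx2)).1
      have hb2 : (2:F) * β ≠ 0 := mul_ne_zero h2 hb
      have : (2*β) * t (α • (1:A) + β • a) = (2*β) * (α + β * t a) := by
        linear_combination -hco
      exact mul_left_cancel₀ hb2 this
  -- t is additive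
  have t_add : ∀ a b : A, t (a + b) = t a + t b := by
    intro a b
    by_cases ha : ∃ c : F, a = c • (1:A)
    · obtain ⟨c, rfl⟩ := ha
      by_cases hb : ∃ d : F, b = d • (1:A)
      · obtain ⟨d, rfl⟩ := hb
        rw [(hc _ c rfl).1, (hc _ d rfl).1, ← add_smul, (hc _ (c+d) rfl).1]
      · have hL := lemL b hb c 1
        rw [one_smul, one_mul] at hL
        rw [hL, (hc _ c rfl).1]
    · by_cases hb : ∃ α β : F, b = α • (1:A) + β • a
      · obtain ⟨α, β, rfl⟩ := hb
        have h1 : a + (α • (1:A) + β • a) = α • (1:A) + (1+β) • a := by module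
        rw [h1, lemL a ha α (1+β), lemL a ha α β]
        ring
      · have indep3 : ∀ p q u : F, p • a + q • b + u • (1:A) = 0 → p = 0 ∧ q = 0 := by
          intro p q u h
          have hq : q = 0 := by
            by_contra hq
            apply hb
            refine ⟨q⁻¹ * (-u), q⁻¹ * (-p), ?_⟩
            have hqb : q • b = (-u) • (1:A) + (-p) • a := by
              rw [neg_smul, neg_smul]
              linear_combination (norm := module) h
            calc b = q⁻¹ • (q • b) := by rw [smul_smul, inv_mul_cancel₀ hq, one_smul]
            _ = (q⁻¹ * (-u)) • (1:A) + (q⁻¹ * (-p)) • a := by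
                rw [hqb, smul_add, smul_smul, smul_smul]
          refine ⟨?_, hq⟩
          rw [hq, zero_smul, add_zero] at h
          have h' : p • a + u • (1:A) = (0:F) • a + (0:F) • (1:A) := by
            rw [zero_smul, zero_smul, add_zero]
            exact h
          exact (indep a ha p u 0 0 h').1
        have h1 : (a+b)*(a+b) + (a-b)*(a-b) = (a*a + a*a) + (b*b + b*b) := by
          rw [add_mul, mul_add, mul_add, sub_mul, mul_sub, mul_sub]
          abel
        rw [hsq (a+b), hsq (a-b), hsq a, hsq b] at h1
        have E : ((2*t (a+b) + 2*t (a-b)) - (2*(2*t a))) • a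
            + ((2*t (a+b) - 2*t (a-b)) - (2*(2*t b))) • b
            + (((- n (a+b)) + (- n (a-b))) - ((-n a) + (-n a) + ((-n b) + (-n b)))) • (1:A)
            = 0 := by
          linear_combination (norm := module) h1
        obtain ⟨e1, e2⟩ := indep3 _ _ _ E
        have h4 : (4:F) ≠ 0 := by
          have : (4:F) = 2*2 := by norm_num
          rw [this]
          exact mul_ne_zero h2 h2
        have : 4 * t (a+b) = 4 * (t a + t b) := by linear_combination e1 + e2
        exact mul_left_cancel₀ h4 this
  -- t of a product identity: n in terms of t
  have n_eq : ∀ a : A, n a = 2 * t a * t a - t (a*a) := by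
    intro a
    have : t (a*a) = t ((2 * t a) • a + (- n a) • (1:A)) := by rw [← hsq a]
    rw [t_add, t_smul, t_smul, t1] at this
    rw [this]
    ring
  -- the bilinear form
  refine ⟨LinearMap.mk₂ F (fun a b => 2 * t a * t b - (t (a*b) + t (b*a))/2)
    (by intro m m' nn; simp only [add_mul, mul_add, t_add]; ring)
    (by intro c m nn; simp only [smul_mul_assoc, mul_smul_comm, t_smul, smul_eq_mul]; ring)
    (by intro m n1 n2; simp only [mul_add, add_mul, t_add]; ring)
    (by intro c m nn; simp only [mul_smul_comm, smul_mul_assoc, t_smul, smul_eq_mul]; ring),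
    ⟨?_, ?_⟩, ?_⟩
  · intro a b
    simp only [LinearMap.mk₂_apply]
    ring
  · intro a
    have hB1 : 2 * t a * t 1 - (t (a*1) + t (1*a))/2 = t a := by
      rw [t1, mul_one, mul_one, one_mul, ← two_mul, mul_div_cancel_left₀ _ h2]
      ring
    have hBa : 2 * t a * t a - (t (a*a) + t (a*a))/2 = n a := by
      rw [n_eq a]
      field_simp
      ring
    simp only [LinearMap.mk₂_apply]
    rw [hB1, hBa, hsq a]
    module
  · rintro B' ⟨hs', hid'⟩
    have hB'11 : B' 1 1 = 1 := by
      have h1 := hid' 1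
      rw [show (1:A)*1 = (1:F) • (1:A) by rw [one_mul, one_smul]] at h1
      have h0 : ((1:F) - B' 1 1) • (1:A) = 0 := by
        rw [sub_smul]
        linear_combination (norm := module) h1
      exact (sub_eq_zero.mp (hsmul0 _ h0)).symm
    have hdiag : ∀ x : A, B' x x = n x := by
      intro x
      by_cases hx : ∃ c : F, x = c • (1:A)
      · obtain ⟨c, rfl⟩ := hx
        rw [(hc _ c rfl).2]
        simp only [map_smul, LinearMap.smul_apply, smul_eq_mul, hB'11]
        ring
      · have hx2 := hid' x
        have hx3 : x * x = (2 * B' x 1) • x + (- B' x x) • (1:A) := by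
          rw [neg_smul]
          linear_combination (norm := module) hx2
        have hco := indep x hx _ _ _ _ (hx3.symm.trans (hsq x))
        exact neg_injective hco.2
    have hBdiag : ∀ x : A, (LinearMap.mk₂ F (fun a b => 2 * t a * t b - (t (a*b) + t (b*a))/2)
        (by intro m m' nn; simp only [add_mul, mul_add, t_add]; ring)
        (by intro c m nn; simp only [smul_mul_assoc, mul_smul_comm, t_smul, smul_eq_mul]; ring)
        (by intro m n1 n2; simp only [mul_add, add_mul, t_add]; ring)
        (by intro c m nn; simp only [mul_smul_comm, smul_mul_assoc, t_smul, smul_eq_mul]; ring) :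
          A →ₗ[F] A →ₗ[F] F) x x = n x := by
      intro x
      simp only [LinearMap.mk₂_apply]
      rw [n_eq x]
      field_simp
      ring
    apply LinearMap.ext
    intro a
    apply LinearMap.ext
    intro b
    have pol : B' (a+b) (a+b) = B' a a + 2 * B' a b + B' b b := by
      simp only [map_add, LinearMap.add_apply]
      rw [hs' b a]
      ring
    have hexp : t ((a+b)*(a+b)) = t (a*a) + t (a*b) + t (b*a) + t (b*b) := by
      rw [show (a+b)*(a+b) = a*a + a*b + (b*a + b*b) by rw [add_mul, mul_add, mul_add],
        t_add, t_add, t_add]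
      ring
    have key2 : 2 * B' a b = 4 * t a * t b - (t (a*b) + t (b*a)) := by
      rw [hdiag a, hdiag b, hdiag (a+b), n_eq (a+b), n_eq a, n_eq b, hexp, t_add] at pol
      linear_combination -pol
    simp only [LinearMap.mk₂_apply]
    refine mul_left_cancel₀ h2 ?_
    rw [key2]
    field_simp
    ring
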